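/- For every n ∈ ℕ₀: ∑_{k=0}^n h(k) = (1/(1−q)) · [ 1 − q^{n+1}(2 − q^n − q^{n+1})/(1 − q^{2n+1}) ] · h(n), and this quantity is strictly less than h(n)/(1−q). -/

import Mathlib

open scoped BigOperators

/-- Recurrence coefficient `a_n` of the little q-Legendre polynomials. -/
noncomputable def aC (q : ℝ) : ℕ → ℝ
  | 0 => 1 / (q + 1)
  | n + 1 => q ^ (n + 1) * (1 + q) * (1 - q ^ (n + 2)) /
      ((1 - q ^ (2 * n + 3)) * (1 + q ^ (n + 2)))

/-- Recurrence coefficient `c_n` of the little q-Legendre polynomials. -/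
noncomputable def cC (q : ℝ) : ℕ → ℝ
  | 0 => 0
  | n + 1 => q ^ (n + 1) * (1 + q) * (1 - q ^ (n + 1)) /
      ((1 - q ^ (2 * n + 3)) * (1 + q ^ (n + 1)))

/-- Recurrence coefficient `b_n = 1 - a_n - c_n`. -/
noncomputable def bC (q : ℝ) (n : ℕ) : ℝ := 1 - aC q n - cC q n

/-- The little q-Legendre polynomials, as functions `ℝ → ℝ`:
`P 0 x = 1`, `P 1 x = (q+1)x - q`, and
`P 1 x * P (n+1) x = a_{n+1} P (n+2) x + b_{n+1} P (n+1) x + c_{n+1} P n x`. -/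
noncomputable def P (q : ℝ) : ℕ → ℝ → ℝ
  | 0, _ => 1
  | 1, x => (q + 1) * x - q
  | n + 2, x =>
      (((q + 1) * x - q) * P q (n + 1) x - bC q (n + 1) * P q (n + 1) x
        - cC q (n + 1) * P q n x) / aC q (n + 1)

/-- Haar weights of the little q-Legendre hypergroup. -/
noncomputable def haar (q : ℝ) (n : ℕ) : ℝ := (1 - q ^ (2 * n + 1)) / (q ^ n * (1 - q))

/-- Finite q-Pochhammer symbol `(a;q)_m`. -/
noncomputable def qpoch (q A : ℝ) (m : ℕ) : ℝ := ∏ j ∈ Finset.range m, (1 - A * q ^ j)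

/-- Infinite q-Pochhammer symbol `(a;q)_∞`. -/
noncomputable def qpochInf (q A : ℝ) : ℝ := ∏' j : ℕ, (1 - A * q ^ j)

/-- partial sums of the Haar weights:
`∑_{k=0}^n h(k) = (1/(1-q))[1 - q^{n+1}(2-qⁿ-q^{n+1})/(1-q^{2n+1})] h(n) < h(n)/(1-q)`. -/
lemma haar_sum (q : ℝ) (hq0 : 0 < q) (hq1 : q < 1) (n : ℕ) :
    (∑ k ∈ Finset.range (n + 1), haar q k) =
      (1 - q ^ (n + 1)) ^ 2 / ((1 - q) ^ 2 * q ^ n) := by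
  induction n with
  | zero =>
    have h1 : (1 : ℝ) - q ≠ 0 := by nlinarith
    simp only [zero_add, mul_zero, pow_one, Finset.sum_range_one, haar]
    field_simp
  | succ n ih =>
    rw [Finset.sum_range_succ, ih]
    have hqn : (0:ℝ) < q ^ n := pow_pos hq0 n
    have h1 : (1 : ℝ) - q ≠ 0 := by nlinarith
    unfold haar
    field_simp
    ring

theorem stmt11 (q : ℝ) (hq0 : 0 < q) (hq1 : q < 1) (n : ℕ) :
    (∑ k ∈ Finset.range (n + 1), haar q k) =
      (1 / (1 - q)) * (1 - q ^ (n + 1) * (2 - q ^ n - q ^ (n + 1)) / (1 - q ^ (2 * n + 1))) *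
        haar q n ∧
    (1 / (1 - q)) * (1 - q ^ (n + 1) * (2 - q ^ n - q ^ (n + 1)) / (1 - q ^ (2 * n + 1))) *
        haar q n < haar q n / (1 - q) := by
  have hqn : (0:ℝ) < q ^ n := pow_pos hq0 n
  have h1 : (0 : ℝ) < 1 - q := by linarith
  have h2 : (0 : ℝ) < 1 - q ^ (2 * n + 1) := by
    have : q ^ (2 * n + 1) < 1 := pow_lt_one₀ hq0.le hq1 (by omega)
    linarith
  have h3 : (0 : ℝ) < 1 - q ^ (n + 1) := by
    have : q ^ (n + 1) < 1 := pow_lt_one₀ hq0.le hq1 (by omega)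
    linarith
  have hn1 : q ^ n ≤ 1 := pow_le_one₀ hq0.le hq1.le
  have key : (1 / (1 - q)) * (1 - q ^ (n + 1) * (2 - q ^ n - q ^ (n + 1)) / (1 - q ^ (2 * n + 1))) *
        haar q n = (1 - q ^ (n + 1)) ^ 2 / ((1 - q) ^ 2 * q ^ n) := by
    unfold haar
    have e : q ^ (2 * n + 1) = q ^ n * q ^ (n + 1) := by rw [← pow_add]; ring_nf
    have e2 : q ^ (n + 1) = q ^ n * q := by rw [← pow_succ]
    rw [e, e2]
    have h2' : (0:ℝ) < 1 - q ^ n * (q ^ n * q) := by rw [e, e2] at h2; linarith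
    generalize q ^ n = x at *
    have h2'' : (1:ℝ) - q * x ^ 2 ≠ 0 := by nlinarith
    field_simp
    ring
  refine ⟨by rw [haar_sum q hq0 hq1 n, key], ?_⟩
  rw [key]
  unfold haar
  rw [div_div, div_lt_div_iff₀ (by positivity) (by positivity)]
  have e : q ^ (2 * n + 1) = q ^ n * q ^ (n + 1) := by rw [← pow_add]; ring_nf
  have e2 : q ^ (n + 1) = q ^ n * q := by rw [← pow_succ]
  rw [e, e2]
  have h3' : (0:ℝ) < 1 - q ^ n * q := by rw [e2] at h3; linarith
  nlinarith [mul_nonneg (mul_nonneg (mul_nonneg hqn.le hq0.le) (sq_nonneg (1 - q))) (by linarith : (0:ℝ) ≤ 1 - q ^ n),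
    mul_pos (mul_pos (mul_pos hqn hq0) (by positivity : (0:ℝ) < (1 - q) ^ 2)) h3']
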